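/- Suppose P̄ is a directional stationary point of the empirical squared loss L of a one-hidden-layer scalar-output ReLU-like network, and suppose hidden neuron i is an escape neuron: there exists a tangential direction v of w̄ᵢ with h̄ᵢ·(dᵢᵛ·v) = 0 and dᵢᵛ·v ≠ 0 (which forces h̄ᵢ = 0). Then there exist a unit vector ℓ in parameter space and a constant C < 0 such that L(P̄ + δℓ) − L(P̄) = C δ² + o(δ²) as δ → 0⁺; in particular P̄ is not a local minimum. -/

import Mathlib

open Filter Topology

set_option maxHeartbeats 2000000 in
/-- At a directional stationary point of the empirical squared loss of a scalar-output
one-hidden-layer ReLU-like network, the presence of an escape neuron `i` (a tangential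
direction `v` of `w̄ᵢ` with `h̄ᵢ·(dᵢᵛ·v) = 0` and `dᵢᵛ·v ≠ 0`) yields a unit direction
`ℓ` of second-order loss decrease: `L(Pbar + δℓ) − L(Pbar) = Cδ² + o(δ²)` with `C < 0`;
in particular `Pbar` is not a local minimum. -/
theorem escape_neuron_second_order_decrease (αp αm : ℝ) (d : ℕ)
    {I K : Type*} [Fintype I] [Fintype K]
    (ρ : ℝ → ℝ) (hρ : ∀ z, ρ z = if 0 ≤ z then αp * z else αm * z)
    (x : K → EuclideanSpace ℝ (Fin d)) (y : K → ℝ)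
    (L : (I → ℝ) × (I → EuclideanSpace ℝ (Fin d)) → ℝ)
    (hL : ∀ P, L P = (1 / 2) * ∑ k,
      ((∑ i, P.1 i * ρ (inner ℝ (P.2 i) (x k) : ℝ)) - y k) ^ 2)
    (Pbar : (I → ℝ) × (I → EuclideanSpace ℝ (Fin d)))
    (hstat : ∀ Δ : (I → ℝ) × (I → EuclideanSpace ℝ (Fin d)), ∀ c : ℝ,
      Filter.Tendsto (fun α : ℝ => (L (Pbar + α • Δ) - L Pbar) / α) (𝓝[>] (0 : ℝ)) (𝓝 c) →
      0 ≤ c)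
    (i : I) (v : EuclideanSpace ℝ (Fin d)) (hv : ‖v‖ = 1)
    (hvw : (inner ℝ v (Pbar.2 i) : ℝ) = 0)
    (e : K → ℝ)
    (he : ∀ k, e k = (∑ i', Pbar.1 i' * ρ (inner ℝ (Pbar.2 i') (x k) : ℝ)) - y k)
    (dv : EuclideanSpace ℝ (Fin d))
    (hdv : ∃ s₀ > (0 : ℝ), ∀ s ∈ Set.Ioo (0 : ℝ) s₀,
      dv = ∑ k, ((if 0 < (inner ℝ (Pbar.2 i + s • v) (x k) : ℝ) then αp
        else if (inner ℝ (Pbar.2 i + s • v) (x k) : ℝ) < 0 then αm else 0) * e k) • x k)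
    (hesc1 : Pbar.1 i * (inner ℝ dv v : ℝ) = 0)
    (hesc2 : (inner ℝ dv v : ℝ) ≠ 0) :
    ∃ (ℓ : (I → ℝ) × (I → EuclideanSpace ℝ (Fin d))) (C : ℝ), ‖ℓ‖ = 1 ∧ C < 0 ∧
      (fun δ : ℝ => L (Pbar + δ • ℓ) - L Pbar - C * δ ^ 2) =o[𝓝[>] (0 : ℝ)]
        (fun δ : ℝ => δ ^ 2) ∧
      ¬ IsLocalMin L Pbar := by
  classical
  obtain ⟨s₀, hs₀, hdvs⟩ := hdv
  obtain ⟨c, hcdef⟩ : ∃ c : K → ℝ, ∀ k, c k = (inner ℝ (Pbar.2 i) (x k) : ℝ) := ⟨_, fun _ => rfl⟩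
  obtain ⟨t, htdef⟩ : ∃ t : K → ℝ, ∀ k, t k = (inner ℝ v (x k) : ℝ) := ⟨_, fun _ => rfl⟩
  obtain ⟨g, hgdef⟩ : ∃ g : K → ℝ, ∀ k, g k =
      (if 0 < c k then αp else if c k < 0 then αm
        else if 0 < t k then αp else if t k < 0 then αm else 0) := ⟨_, fun _ => rfl⟩
  have hinner : ∀ (s : ℝ) (k : K),
      (inner ℝ (Pbar.2 i + s • v) (x k) : ℝ) = c k + s * t k := by
    intro s k
    rw [inner_add_left, real_inner_smul_left, ← hcdef k, ← htdef k]
  have hhi : Pbar.1 i = 0 := by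
    rcases mul_eq_zero.1 hesc1 with h | h
    · exact h
    · exact absurd h hesc2
  -- the eventual activation pattern
  have hev : ∀ᶠ s in 𝓝[>] (0:ℝ), ∀ k,
      ((if 0 < (inner ℝ (Pbar.2 i + s • v) (x k) : ℝ) then αp
        else if (inner ℝ (Pbar.2 i + s • v) (x k) : ℝ) < 0 then αm else 0) = g k)
      ∧ ρ ((inner ℝ (Pbar.2 i + s • v) (x k) : ℝ)) = g k * (c k + s * t k) := by
    rw [eventually_all]
    intro k
    have htend : Tendsto (fun s : ℝ => c k + s * t k) (𝓝[>] (0:ℝ)) (𝓝 (c k)) := by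
      have hc : Continuous (fun s : ℝ => c k + s * t k) :=
        continuous_const.add (continuous_id.mul continuous_const)
      exact (hc.tendsto' 0 (c k) (by simp)).mono_left nhdsWithin_le_nhds
    rcases lt_trichotomy (c k) 0 with hck | hck | hck
    · filter_upwards [htend.eventually_lt_const hck] with s hs
      rw [hinner s k]
      have h1 : ¬ (0 < c k + s * t k) := by linarith
      refine ⟨by rw [if_neg h1, if_pos hs, hgdef k, if_neg (not_lt.2 hck.le), if_pos hck], ?_⟩
      rw [hρ, if_neg (not_le.2 hs), hgdef k, if_neg (not_lt.2 hck.le), if_pos hck]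
    · filter_upwards [self_mem_nhdsWithin] with s hs
      have hs0 : (0:ℝ) < s := hs
      rw [hinner s k, hck, zero_add]
      have hg : g k = (if 0 < t k then αp else if t k < 0 then αm else 0) := by
        rw [hgdef k, hck]; simp
      rcases lt_trichotomy (t k) 0 with htk | htk | htk
      · have hz : s * t k < 0 := mul_neg_of_pos_of_neg hs0 htk
        refine ⟨by rw [if_neg (by linarith), if_pos hz, hg, if_neg (not_lt.2 htk.le), if_pos htk], ?_⟩
        rw [hρ, if_neg (not_le.2 hz), hg, if_neg (not_lt.2 htk.le), if_pos htk]
      · rw [htk, mul_zero]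
        refine ⟨by simp [hg, htk], ?_⟩
        rw [hρ]; simp
      · have hz : 0 < s * t k := mul_pos hs0 htk
        refine ⟨by rw [if_pos hz, hg, if_pos htk], ?_⟩
        rw [hρ, if_pos hz.le, hg, if_pos htk]
    · filter_upwards [htend.eventually_const_lt hck] with s hs
      rw [hinner s k]
      refine ⟨by rw [if_pos hs, hgdef k, if_pos hck], ?_⟩
      rw [hρ, if_pos hs.le, hgdef k, if_pos hck]
  -- identify dv
  have hdvg : dv = ∑ k, (g k * e k) • x k := by
    have hIoo : ∀ᶠ s in 𝓝[>] (0:ℝ), s ∈ Set.Ioo (0:ℝ) s₀ :=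
      Ioo_mem_nhdsGT_of_mem (by simp [hs₀])
    obtain ⟨s, hs1, hs2⟩ := (hev.and hIoo).exists
    rw [hdvs s hs2]
    refine Finset.sum_congr rfl fun k _ => ?_
    rw [(hs1 k).1]
  set τ : ℝ := (inner ℝ dv v : ℝ) with hτdef
  have hτ : τ = ∑ k, g k * e k * t k := by
    rw [hτdef, hdvg, sum_inner]
    refine Finset.sum_congr rfl fun k _ => ?_
    rw [real_inner_smul_left, real_inner_comm, ← htdef k]
  have hτne : τ ≠ 0 := hesc2
  -- model output after perturbation of neuron i
  have hmodel : ∀ (h0 : ℝ) (w0 : EuclideanSpace ℝ (Fin d)) (α : ℝ) (k : K),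
      (∑ i', (Pbar + α • ((Pi.single i h0, Pi.single i w0) : (I → ℝ) × (I → EuclideanSpace ℝ (Fin d)))).1 i'
          * ρ ((inner ℝ ((Pbar + α • ((Pi.single i h0, Pi.single i w0) : (I → ℝ) × (I → EuclideanSpace ℝ (Fin d)))).2 i') (x k) : ℝ)))
      = (e k + y k) + ((Pbar.1 i + α * h0) * ρ (c k + α * (inner ℝ w0 (x k) : ℝ))
          - Pbar.1 i * ρ (c k)) := by
    intro h0 w0 α k
    have hsplit : ∀ i', (Pbar + α • ((Pi.single i h0, Pi.single i w0) : (I → ℝ) × (I → EuclideanSpace ℝ (Fin d)))).1 i'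
          * ρ ((inner ℝ ((Pbar + α • ((Pi.single i h0, Pi.single i w0) : (I → ℝ) × (I → EuclideanSpace ℝ (Fin d)))).2 i') (x k) : ℝ))
        = Pbar.1 i' * ρ ((inner ℝ (Pbar.2 i') (x k) : ℝ))
          + (if i' = i then ((Pbar.1 i + α * h0) * ρ (c k + α * (inner ℝ w0 (x k) : ℝ))
              - Pbar.1 i * ρ (c k)) else 0) := by
      intro i'
      by_cases h : i' = i
      · subst h
        simp only [Prod.fst_add, Prod.snd_add, Prod.smul_fst, Prod.smul_snd, Pi.add_apply,
          Pi.smul_apply, Pi.single_eq_same, smul_eq_mul, if_pos rfl, if_true]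
        rw [inner_add_left, real_inner_smul_left, ← hcdef k]
        ring
      · simp only [Prod.fst_add, Prod.snd_add, Prod.smul_fst, Prod.smul_snd, Pi.add_apply,
          Pi.smul_apply, Pi.single_apply, if_neg h, smul_zero, add_zero, mul_zero]
    rw [Finset.sum_congr rfl fun i' _ => hsplit i', Finset.sum_add_distrib,
      Finset.sum_ite_eq' Finset.univ i, he k]
    simp only [Finset.mem_univ, if_true]
    ring
  -- loss difference formula
  have hLdiff : ∀ (h0 : ℝ) (w0 : EuclideanSpace ℝ (Fin d)) (α : ℝ),
      L (Pbar + α • ((Pi.single i h0, Pi.single i w0) : (I → ℝ) × (I → EuclideanSpace ℝ (Fin d)))) - L Pbar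
      = ∑ k, (e k * ((Pbar.1 i + α * h0) * ρ (c k + α * (inner ℝ w0 (x k) : ℝ))
              - Pbar.1 i * ρ (c k))
          + ((Pbar.1 i + α * h0) * ρ (c k + α * (inner ℝ w0 (x k) : ℝ))
              - Pbar.1 i * ρ (c k)) ^ 2 / 2) := by
    intro h0 w0 α
    rw [hL, hL, ← mul_sub, ← Finset.sum_sub_distrib, Finset.mul_sum]
    refine Finset.sum_congr rfl fun k _ => ?_
    rw [hmodel h0 w0 α k, ← he k]
    ring
  -- stationarity in the h_i coordinate
  have hD0 : ∑ k, e k * ρ (c k) = 0 := by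
    have key : ∀ h0 : ℝ, 0 ≤ ∑ k, e k * (h0 * ρ (c k)) := by
      intro h0
      refine hstat ((Pi.single i h0, Pi.single i (0 : EuclideanSpace ℝ (Fin d))) : (I → ℝ) × (I → EuclideanSpace ℝ (Fin d))) _ ?_
      have heq : ∀ᶠ α in 𝓝[>] (0:ℝ),
          (L (Pbar + α • ((Pi.single i h0, Pi.single i (0 : EuclideanSpace ℝ (Fin d))) : (I → ℝ) × (I → EuclideanSpace ℝ (Fin d))))
            - L Pbar) / α
          = (∑ k, e k * (h0 * ρ (c k))) + α * (∑ k, (h0 * ρ (c k)) ^ 2 / 2) := by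
        filter_upwards [self_mem_nhdsWithin] with α hα
        have hα0 : (α:ℝ) ≠ 0 := ne_of_gt hα
        rw [hLdiff h0 0 α]
        have hterm : ∀ k : K,
            e k * ((Pbar.1 i + α * h0) * ρ (c k + α * (inner ℝ (0 : EuclideanSpace ℝ (Fin d)) (x k) : ℝ))
                - Pbar.1 i * ρ (c k))
            + ((Pbar.1 i + α * h0) * ρ (c k + α * (inner ℝ (0 : EuclideanSpace ℝ (Fin d)) (x k) : ℝ))
                - Pbar.1 i * ρ (c k)) ^ 2 / 2
            = α * (e k * (h0 * ρ (c k))) + α ^ 2 * ((h0 * ρ (c k)) ^ 2 / 2) := by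
          intro k
          rw [inner_zero_left, mul_zero, add_zero, hhi]
          ring
        rw [Finset.sum_congr rfl fun k _ => hterm k, Finset.sum_add_distrib,
          ← Finset.mul_sum, ← Finset.mul_sum]
        exact (show ∀ S T : ℝ, (α * S + α ^ 2 * T) / α = S + α * T from
          fun S T => by field_simp) _ _
      have htt : Tendsto (fun α : ℝ =>
          (∑ k, e k * (h0 * ρ (c k))) + α * (∑ k, (h0 * ρ (c k)) ^ 2 / 2))
          (𝓝[>] (0:ℝ)) (𝓝 (∑ k, e k * (h0 * ρ (c k)))) := by
        have hc : Continuous (fun α : ℝ =>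
            (∑ k, e k * (h0 * ρ (c k))) + α * (∑ k, (h0 * ρ (c k)) ^ 2 / 2)) :=
          continuous_const.add (continuous_id.mul continuous_const)
        exact (hc.tendsto' 0 (∑ k, e k * (h0 * ρ (c k))) (by simp)).mono_left
          (nhdsWithin_le_nhds (s := Set.Ioi (0:ℝ)))
      have heq' : (fun α : ℝ =>
          (L (Pbar + α • ((Pi.single i h0, Pi.single i (0 : EuclideanSpace ℝ (Fin d))) : (I → ℝ) × (I → EuclideanSpace ℝ (Fin d)))) - L Pbar) / α)
          =ᶠ[𝓝[>] (0:ℝ)] (fun α : ℝ =>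
          (∑ k, e k * (h0 * ρ (c k))) + α * (∑ k, (h0 * ρ (c k)) ^ 2 / 2)) := heq
      exact htt.congr' heq'.symm
    have h1 := key 1
    have h2 := key (-1)
    have ha : ∑ k, e k * ((1:ℝ) * ρ (c k)) = ∑ k, e k * ρ (c k) := by simp
    have hb : ∑ k, e k * ((-1:ℝ) * ρ (c k)) = -∑ k, e k * ρ (c k) := by
      rw [← Finset.sum_neg_distrib]
      exact Finset.sum_congr rfl fun k _ => by ring
    rw [ha] at h1
    rw [hb] at h2
    linarith
  have hrg : ∀ k, ρ (c k) = g k * c k := by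
    intro k
    rcases lt_trichotomy (c k) 0 with h | h | h
    · rw [hρ, if_neg (not_le.2 h), hgdef k, if_neg (not_lt.2 h.le), if_pos h]
    · rw [h, hρ, hgdef k]; simp
    · rw [hρ, if_pos h.le, hgdef k, if_pos h]
  have hD0g : ∑ k, e k * (g k * c k) = 0 := by
    rw [← hD0]
    exact Finset.sum_congr rfl fun k _ => by rw [hrg k]
  -- constants
  set M : ℝ := ∑ k, (g k * c k) ^ 2 with hMdef
  have hM0 : 0 ≤ M := Finset.sum_nonneg fun k _ => sq_nonneg _
  set a : ℝ := min 1 (|τ| / (M + 1)) with hadef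
  have hτpos : 0 < |τ| := abs_pos.2 hτne
  have ha0 : 0 < a := lt_min one_pos (by positivity)
  have ha1 : a ≤ 1 := min_le_left _ _
  have haM : a * (M + 1) ≤ |τ| := by
    have := min_le_right 1 (|τ| / (M + 1))
    rw [hadef]
    calc min 1 (|τ| / (M + 1)) * (M + 1) ≤ (|τ| / (M + 1)) * (M + 1) := by
          apply mul_le_mul_of_nonneg_right this (by linarith)
      _ = |τ| := by field_simp
  set sg : ℝ := if 0 < τ then 1 else -1 with hsgdef
  have hsg2 : sg ^ 2 = 1 := by
    by_cases h : 0 < τ <;> simp [hsgdef, h]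
  have hsgτ : sg * τ = |τ| := by
    by_cases h : 0 < τ
    · rw [hsgdef, if_pos h, one_mul, abs_of_pos h]
    · have hlt : τ < 0 := lt_of_le_of_ne (not_lt.1 h) hτne
      rw [hsgdef, if_neg h, abs_of_neg hlt]; ring
  set C : ℝ := -(a * |τ|) + a ^ 2 / 2 * M with hCdef
  have hC : C < 0 := by
    rw [hCdef]
    nlinarith [mul_pos ha0 hτpos, mul_pos ha0 ha0]
  set A : ℝ := a ^ 2 * ∑ k, (g k) ^ 2 * (c k * t k) with hAdef
  set B : ℝ := a ^ 2 / 2 * ∑ k, (g k * t k) ^ 2 with hBdef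
  set ℓ : (I → ℝ) × (I → EuclideanSpace ℝ (Fin d)) :=
    (Pi.single i (-(sg * a)), Pi.single i v) with hℓdef
  have hℓnorm : ‖ℓ‖ = 1 := by
    have h1 : ‖ℓ.1‖ = a := by
      rw [hℓdef]
      have : ‖(Pi.single i (-(sg * a)) : I → ℝ)‖ = ‖-(sg * a)‖ :=
        Pi.norm_single (G := fun _ : I => ℝ) (i := i) _
      rw [this, norm_neg, Real.norm_eq_abs, abs_mul]
      have : |sg| = 1 := by by_cases h : 0 < τ <;> simp [hsgdef, h]
      rw [this, one_mul, abs_of_pos ha0]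
    have h2 : ‖ℓ.2‖ = 1 := by
      rw [hℓdef]
      have : ‖(Pi.single i v : I → EuclideanSpace ℝ (Fin d))‖ = ‖v‖ :=
        Pi.norm_single (G := fun _ : I => EuclideanSpace ℝ (Fin d)) (i := i) v
      rw [this, hv]
    have : ‖ℓ‖ = max ‖ℓ.1‖ ‖ℓ.2‖ := rfl
    rw [this, h1, h2]
    exact max_eq_right ha1
  -- main expansion
  have hmain : ∀ᶠ δ in 𝓝[>] (0:ℝ),
      L (Pbar + δ • ℓ) - L Pbar - C * δ ^ 2 = δ ^ 3 * (A + δ * B) := by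
    filter_upwards [hev, self_mem_nhdsWithin] with δ hδev hδpos
    rw [hℓdef, hLdiff (-(sg * a)) v δ]
    have hterm : ∀ k : K,
        e k * ((Pbar.1 i + δ * (-(sg * a))) * ρ (c k + δ * (inner ℝ v (x k) : ℝ))
            - Pbar.1 i * ρ (c k))
        + ((Pbar.1 i + δ * (-(sg * a))) * ρ (c k + δ * (inner ℝ v (x k) : ℝ))
            - Pbar.1 i * ρ (c k)) ^ 2 / 2
        = δ * (-(sg * a) * (e k * (g k * c k))) + δ ^ 2 * (-(sg * a) * (g k * e k * t k))
          + δ ^ 2 * (a ^ 2 / 2 * (g k * c k) ^ 2)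
          + δ ^ 3 * (a ^ 2 * ((g k) ^ 2 * (c k * t k)))
          + δ ^ 4 * (a ^ 2 / 2 * (g k * t k) ^ 2) := by
      intro k
      have hρk : ρ (c k + δ * t k) = g k * (c k + δ * t k) := by
        have h := (hδev k).2
        rw [hinner δ k] at h
        exact h
      rw [← htdef k, hρk, hhi]
      linear_combination ((a * δ * (g k * (c k + δ * t k))) ^ 2 / 2) * hsg2
    rw [Finset.sum_congr rfl fun k _ => hterm k]
    simp only [Finset.sum_add_distrib, ← Finset.mul_sum]
    rw [hD0g, ← hτ, ← hMdef]
    rw [hCdef, hAdef, hBdef]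
    linear_combination (-(δ ^ 2 * a)) * hsgτ
  -- little-o
  have ho : (fun δ : ℝ => L (Pbar + δ • ℓ) - L Pbar - C * δ ^ 2)
      =o[𝓝[>] (0:ℝ)] (fun δ : ℝ => δ ^ 2) := by
    have h2 : Tendsto (fun δ : ℝ => δ * (A + δ * B)) (𝓝[>] (0:ℝ)) (𝓝 0) := by
      have hc : Continuous (fun δ : ℝ => δ * (A + δ * B)) :=
        continuous_id.mul (continuous_const.add (continuous_id.mul continuous_const))
      exact (hc.tendsto' 0 0 (by simp)).mono_left nhdsWithin_le_nhds
    have h3 := (Asymptotics.isLittleO_one_iff ℝ).2 h2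
    have h4 := (Asymptotics.isBigO_refl (fun δ : ℝ => δ ^ 2) (𝓝[>] (0:ℝ))).mul_isLittleO h3
    have h5 : (fun δ : ℝ => δ ^ 3 * (A + δ * B)) =o[𝓝[>] (0:ℝ)] (fun δ : ℝ => δ ^ 2) :=
      h4.congr (fun δ => by ring) (fun δ => by ring)
    have hmain' : (fun δ : ℝ => L (Pbar + δ • ℓ) - L Pbar - C * δ ^ 2)
        =ᶠ[𝓝[>] (0:ℝ)] (fun δ : ℝ => δ ^ 3 * (A + δ * B)) := hmain
    exact h5.congr' hmain'.symm EventuallyEq.rfl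
  -- not a local min
  have hnotmin : ¬ IsLocalMin L Pbar := by
    intro hmin
    have hcont : Tendsto (fun δ : ℝ => Pbar + δ • ℓ) (𝓝[>] (0:ℝ)) (𝓝 Pbar) := by
      have hc : Continuous (fun δ : ℝ => Pbar + δ • ℓ) :=
        continuous_const.add (continuous_id.smul continuous_const)
      exact (hc.tendsto' 0 Pbar (by simp)).mono_left nhdsWithin_le_nhds
    have hge : ∀ᶠ δ in 𝓝[>] (0:ℝ), L Pbar ≤ L (Pbar + δ • ℓ) := hcont.eventually hmin
    have htt : Tendsto (fun δ : ℝ => C + δ * (A + δ * B)) (𝓝[>] (0:ℝ)) (𝓝 C) := by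
      have hc : Continuous (fun δ : ℝ => C + δ * (A + δ * B)) :=
        continuous_const.add (continuous_id.mul (continuous_const.add (continuous_id.mul continuous_const)))
      exact (hc.tendsto' 0 C (by simp)).mono_left nhdsWithin_le_nhds
    have hlt : ∀ᶠ δ in 𝓝[>] (0:ℝ), L (Pbar + δ • ℓ) < L Pbar := by
      filter_upwards [hmain, htt.eventually_lt_const hC, self_mem_nhdsWithin] with δ h1 h2 h3
      have hδpos : (0:ℝ) < δ := h3
      have e1 : L (Pbar + δ • ℓ) - L Pbar = δ ^ 2 * (C + δ * (A + δ * B)) := by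
        linear_combination h1
      nlinarith [mul_pos (mul_pos hδpos hδpos) (neg_pos.2 h2)]
    obtain ⟨δ, h1, h2⟩ := (hge.and hlt).exists
    exact absurd (lt_of_le_of_lt h1 h2) (lt_irrefl _)
  exact ⟨ℓ, C, hℓnorm, hC, ho, hnotmin⟩
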